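/- Consistency of the discrete divergence: for smooth functions u, v : ℝ² → ℝ, the averaged divergence 𝒟(u,v)(x,y) = [ (u(x+Δx,y+Δy)+2u(x+Δx,y)+u(x+Δx,y-Δy)) - (u(x-Δx,y+Δy)+2u(x-Δx,y)+u(x-Δx,y-Δy)) ]/(8Δx) + [ (v(x+Δx,y+Δy)+2v(x,y+Δy)+v(x-Δx,y+Δy)) - (v(x+Δx,y-Δy)+2v(x,y-Δy)+v(x-Δx,y-Δy)) ]/(8Δy) converges to ∂_x u(x,y) + ∂_y v(x,y) as (Δx, Δy) → (0,0) with Δx, Δy > 0, provided u and v are continuously differentiable (C¹). -/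

import Mathlib

open Filter Topology Asymptotics

private lemma key_gen (u : ℝ × ℝ → ℝ) (hu : ContDiff ℝ 1 u) (x y : ℝ)
    (p q : ℝ × ℝ → ℝ × ℝ) (hp : Continuous p) (hq : Continuous q)
    (hp0 : p 0 = (x, y)) (hq0 : q 0 = (x, y)) (w : ℝ × ℝ) (s : ℝ × ℝ → ℝ)
    (hdiff : ∀ d : ℝ × ℝ, p d - q d = (2 * s d) • w)
    (hspos : ∀ d : ℝ × ℝ, d ∈ Set.Ioi (0:ℝ) ×ˢ Set.Ioi (0:ℝ) → 0 < s d) :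
    Tendsto (fun d : ℝ × ℝ => (u (p d) - u (q d)) / (8 * s d))
      (𝓝[Set.Ioi 0 ×ˢ Set.Ioi 0] (0, 0))
      (𝓝 (fderiv ℝ u (x, y) w / 4)) := by
  set f := fderiv ℝ u (x, y) with hf
  have hstrict : HasStrictFDerivAt u f (x, y) :=
    (hu.contDiffAt).hasStrictFDerivAt one_ne_zero
  set F := 𝓝[Set.Ioi 0 ×ˢ Set.Ioi 0] ((0 : ℝ), (0 : ℝ)) with hF
  have hφ : Tendsto (fun d : ℝ × ℝ => (p d, q d)) F (𝓝 ((x, y), (x, y))) := by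
    apply Tendsto.mono_left _ nhdsWithin_le_nhds
    have hc : Continuous (fun d : ℝ × ℝ => (p d, q d)) := hp.prodMk hq
    have := hc.tendsto (0, 0)
    simpa [Prod.mk_zero_zero, hp0, hq0] using this
  have h1 : (fun d : ℝ × ℝ => u (p d) - u (q d) - f (p d - q d)) =o[F]
      (fun d : ℝ × ℝ => p d - q d) := hstrict.isLittleO.comp_tendsto hφ
  have hO : (fun d : ℝ × ℝ => p d - q d) =O[F] (fun d : ℝ × ℝ => 8 * s d) := by
    apply IsBigO.of_bound ‖w‖
    filter_upwards with d
    rw [hdiff d, norm_smul]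
    have hle : ‖(2 * s d : ℝ)‖ ≤ ‖(8 * s d : ℝ)‖ := by
      simp only [Real.norm_eq_abs, abs_mul]
      norm_num
      nlinarith [abs_nonneg (s d)]
    calc ‖(2 * s d : ℝ)‖ * ‖w‖ ≤ ‖(8 * s d : ℝ)‖ * ‖w‖ :=
          mul_le_mul_of_nonneg_right hle (norm_nonneg w)
      _ = ‖w‖ * ‖(8 * s d : ℝ)‖ := mul_comm _ _
  have h2 : Tendsto (fun d : ℝ × ℝ =>
      (u (p d) - u (q d) - f (p d - q d)) / (8 * s d)) F (𝓝 0) :=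
    (h1.trans_isBigO hO).tendsto_div_nhds_zero
  have h3 : Tendsto (fun d : ℝ × ℝ =>
      (u (p d) - u (q d) - f (p d - q d)) / (8 * s d) + f w / 4) F (𝓝 (f w / 4)) := by
    simpa using h2.add (tendsto_const_nhds (x := f w / 4) (f := F))
  apply h3.congr'
  filter_upwards [eventually_mem_nhdsWithin] with d hd
  have hsd : (0:ℝ) < s d := hspos d hd
  rw [hdiff d, map_smul]
  simp only [smul_eq_mul]
  field_simp
  ring

theorem averaged_divergence_consistency (u v : ℝ × ℝ → ℝ)
    (hu : ContDiff ℝ 1 u) (hv : ContDiff ℝ 1 v) (x y : ℝ) :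
    Tendsto (fun d : ℝ × ℝ =>
      ((u (x + d.1, y + d.2) + 2 * u (x + d.1, y) + u (x + d.1, y - d.2))
        - (u (x - d.1, y + d.2) + 2 * u (x - d.1, y) + u (x - d.1, y - d.2))) / (8 * d.1)
      + ((v (x + d.1, y + d.2) + 2 * v (x, y + d.2) + v (x - d.1, y + d.2))
        - (v (x + d.1, y - d.2) + 2 * v (x, y - d.2) + v (x - d.1, y - d.2))) / (8 * d.2))
      (𝓝[Set.Ioi 0 ×ˢ Set.Ioi 0] (0, 0))
      (𝓝 (fderiv ℝ u (x, y) (1, 0) + fderiv ℝ v (x, y) (0, 1))) := by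
  have U1 := key_gen u hu x y (fun d => (x + d.1, y + d.2)) (fun d => (x - d.1, y + d.2))
    (by fun_prop) (by fun_prop) (by simp) (by simp) (1, 0) (fun d => d.1)
    (fun d => by simp [Prod.ext_iff]; ring) (fun d hd => hd.1)
  have U2 := key_gen u hu x y (fun d => (x + d.1, y)) (fun d => (x - d.1, y))
    (by fun_prop) (by fun_prop) (by simp) (by simp) (1, 0) (fun d => d.1)
    (fun d => by simp [Prod.ext_iff]; ring) (fun d hd => hd.1)
  have U3 := key_gen u hu x y (fun d => (x + d.1, y - d.2)) (fun d => (x - d.1, y - d.2))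
    (by fun_prop) (by fun_prop) (by simp) (by simp) (1, 0) (fun d => d.1)
    (fun d => by simp [Prod.ext_iff]; ring) (fun d hd => hd.1)
  have V1 := key_gen v hv x y (fun d => (x + d.1, y + d.2)) (fun d => (x + d.1, y - d.2))
    (by fun_prop) (by fun_prop) (by simp) (by simp) (0, 1) (fun d => d.2)
    (fun d => by simp [Prod.ext_iff]; ring) (fun d hd => hd.2)
  have V2 := key_gen v hv x y (fun d => (x, y + d.2)) (fun d => (x, y - d.2))
    (by fun_prop) (by fun_prop) (by simp) (by simp) (0, 1) (fun d => d.2)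
    (fun d => by simp [Prod.ext_iff]; ring) (fun d hd => hd.2)
  have V3 := key_gen v hv x y (fun d => (x - d.1, y + d.2)) (fun d => (x - d.1, y - d.2))
    (by fun_prop) (by fun_prop) (by simp) (by simp) (0, 1) (fun d => d.2)
    (fun d => by simp [Prod.ext_iff]; ring) (fun d hd => hd.2)
  have H := (U1.add ((U2.const_mul (2:ℝ)).add U3)).add
    (V1.add ((V2.const_mul (2:ℝ)).add V3))
  have heq : fderiv ℝ u (x, y) (1, 0) + fderiv ℝ v (x, y) (0, 1)
      = (fderiv ℝ u (x, y) (1, 0) / 4 + (2 * (fderiv ℝ u (x, y) (1, 0) / 4)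
        + fderiv ℝ u (x, y) (1, 0) / 4))
      + (fderiv ℝ v (x, y) (0, 1) / 4 + (2 * (fderiv ℝ v (x, y) (0, 1) / 4)
        + fderiv ℝ v (x, y) (0, 1) / 4)) := by ring
  rw [heq]
  exact H.congr (fun d => by ring)
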